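/- In the ring A = Z_3[[a_1, b_1, a_2, b_2]]/(a_1 b_1 - 3, a_2 b_2 - 3), the ideal P generated by the images of a_1 and a_2 is a prime ideal. -/

import Mathlib

/-! The ring `A = ℤ₃[[a₁, b₁, a₂, b₂]] / (a₁b₁ - 3, a₂b₂ - 3)`, where `ℤ₃ = ℤ_[3]` is the
ring of 3-adic integers: the completed local ring of the family of compactified jacobians
at the point `[I]`, `I = ν⁎𝒪(-2)`, in Kass's example. -/

/-- The formal power series ring `ℤ₃[[a₁, b₁, a₂, b₂]]` in four variables over the
3-adic integers. -/
abbrev B : Type := MvPowerSeries (Fin 4) ℤ_[3]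

/-- The ideal `(a₁b₁ - 3, a₂b₂ - 3)` of `ℤ₃[[a₁, b₁, a₂, b₂]]`, where `a₁, b₁, a₂, b₂`
are the four variables. -/
noncomputable abbrev relIdeal : Ideal B :=
  Ideal.span {MvPowerSeries.X 0 * MvPowerSeries.X 1 - 3,
    MvPowerSeries.X 2 * MvPowerSeries.X 3 - 3}

/-- The ring `A = ℤ₃[[a₁, b₁, a₂, b₂]] / (a₁b₁ - 3, a₂b₂ - 3)`. -/
abbrev A : Type := B ⧸ relIdeal

/-- The image `a₁` in `A` of the first variable. -/
noncomputable def a1 : A := Ideal.Quotient.mk relIdeal (MvPowerSeries.X 0)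

/-- The image `b₁` in `A` of the second variable. -/
noncomputable def b1 : A := Ideal.Quotient.mk relIdeal (MvPowerSeries.X 1)

/-- The image `a₂` in `A` of the third variable. -/
noncomputable def a2 : A := Ideal.Quotient.mk relIdeal (MvPowerSeries.X 2)

/-- The image `b₂` in `A` of the fourth variable. -/
noncomputable def b2 : A := Ideal.Quotient.mk relIdeal (MvPowerSeries.X 3)

/-- Restriction to monomials not involving `X 0` and `X 2`. -/
noncomputable def resFun {k : Type*} [CommRing k] (f : MvPowerSeries (Fin 4) k) :
    MvPowerSeries (Fin 4) k :=
  fun d => if d 0 = 0 ∧ d 2 = 0 then f d else 0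

lemma coeff_res {k : Type*} [CommRing k] (f : MvPowerSeries (Fin 4) k) (d : Fin 4 →₀ ℕ) :
    MvPowerSeries.coeff d (resFun f) =
      if d 0 = 0 ∧ d 2 = 0 then MvPowerSeries.coeff d f else 0 := rfl

lemma res_one {k : Type*} [CommRing k] :
    resFun (1 : MvPowerSeries (Fin 4) k) = 1 := by
  classical
  ext d
  rw [coeff_res, MvPowerSeries.coeff_one]
  split_ifs with h h2 h2
  · rfl
  · rfl
  · exact absurd (by simp [h2]) h
  · rfl

lemma res_mul {k : Type*} [CommRing k] (f g : MvPowerSeries (Fin 4) k) :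
    resFun (f * g) = resFun f * resFun g := by
  classical
  ext d
  rw [coeff_res, MvPowerSeries.coeff_mul, MvPowerSeries.coeff_mul]
  simp only [coeff_res]
  split_ifs with h
  · refine Finset.sum_congr rfl fun p hp => ?_
    rw [Finset.HasAntidiagonal.mem_antidiagonal] at hp
    have h0 : p.1 0 + p.2 0 = 0 := by rw [← Finsupp.add_apply, hp]; exact h.1
    have h2 : p.1 2 + p.2 2 = 0 := by rw [← Finsupp.add_apply, hp]; exact h.2
    rw [if_pos ⟨(Nat.add_eq_zero.mp h0).1, (Nat.add_eq_zero.mp h2).1⟩,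
      if_pos ⟨(Nat.add_eq_zero.mp h0).2, (Nat.add_eq_zero.mp h2).2⟩]
  · refine (Finset.sum_eq_zero fun p hp => ?_).symm
    rw [Finset.HasAntidiagonal.mem_antidiagonal] at hp
    rcases Classical.em (p.1 0 = 0 ∧ p.1 2 = 0) with h1 | h1
    · have hn : ¬(p.2 0 = 0 ∧ p.2 2 = 0) := by
        rintro ⟨u0, u2⟩
        exact h ⟨by rw [← hp, Finsupp.add_apply, h1.1, u0],
          by rw [← hp, Finsupp.add_apply, h1.2, u2]⟩
      rw [if_neg hn, mul_zero]
    · rw [if_neg h1, zero_mul]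

lemma res_add {k : Type*} [CommRing k] (f g : MvPowerSeries (Fin 4) k) :
    resFun (f + g) = resFun f + resFun g := by
  ext d
  rw [map_add, coeff_res, coeff_res, coeff_res]
  split_ifs <;> simp

/-- `resFun` as a ring hom. -/
noncomputable def resHom (k : Type*) [CommRing k] :
    MvPowerSeries (Fin 4) k →+* MvPowerSeries (Fin 4) k where
  toFun := resFun
  map_one' := res_one
  map_mul' := res_mul
  map_zero' := by ext d; rw [coeff_res]; simp
  map_add' := res_add

lemma resHom_apply {k : Type*} [CommRing k] (f : MvPowerSeries (Fin 4) k) :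
    resHom k f = resFun f := rfl

/-- The composite `B → MvPowerSeries (Fin 4) (ZMod 3)`. -/
noncomputable def piHom : B →+* MvPowerSeries (Fin 4) (ZMod 3) :=
  (resHom (ZMod 3)).comp (MvPowerSeries.map (PadicInt.toZMod))

/-- The ideal `(X 0, X 2, 3)` of `B`. -/
noncomputable def J : Ideal B :=
  Ideal.span {MvPowerSeries.X 0, MvPowerSeries.X 2, (3 : B)}

lemma dvd_three {x : ℤ_[3]} (h : PadicInt.toZMod x = 0) : (3 : ℤ_[3]) ∣ x := by
  have hx : x ∈ RingHom.ker (PadicInt.toZMod : ℤ_[3] →+* ZMod 3) := h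
  rw [PadicInt.ker_toZMod, PadicInt.maximalIdeal_eq_span_p, Ideal.mem_span_singleton] at hx
  simpa using hx

lemma mem_J_of_dvd {f : B}
    (hf : ∀ d : Fin 4 →₀ ℕ, d 0 = 0 ∧ d 2 = 0 → (3 : ℤ_[3]) ∣ MvPowerSeries.coeff d f) :
    f ∈ J := by
  classical
  set f₀ : B := (fun d => if h : d 0 = 0 ∧ d 2 = 0 then (hf d h).choose else 0) with hf₀
  set g : B := (fun d => f (d + Finsupp.single 0 1)) with hg
  set h' : B := (fun d => if d 0 = 0 then f (d + Finsupp.single 2 1) else 0) with hh'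
  have cf₀ : ∀ e : Fin 4 →₀ ℕ, MvPowerSeries.coeff e f₀ =
      if h : e 0 = 0 ∧ e 2 = 0 then (hf e h).choose else 0 := by
    intro e; simp only [MvPowerSeries.coeff_apply, hf₀]; rfl
  have cg : ∀ e : Fin 4 →₀ ℕ, MvPowerSeries.coeff e g =
      MvPowerSeries.coeff (e + Finsupp.single 0 1) f := by
    intro e; simp only [MvPowerSeries.coeff_apply, hg]; rfl
  have ch : ∀ e : Fin 4 →₀ ℕ, MvPowerSeries.coeff e h' =
      if e 0 = 0 then MvPowerSeries.coeff (e + Finsupp.single 2 1) f else 0 := by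
    intro e; simp only [MvPowerSeries.coeff_apply, hh']; rfl
  have key : f = MvPowerSeries.X 0 * g + MvPowerSeries.X 2 * h' + 3 * f₀ := by
    ext d
    rw [map_add, map_add,
      show (3 : B) = MvPowerSeries.C (σ := Fin 4) (R := ℤ_[3]) 3 from (map_ofNat _ 3).symm,
      MvPowerSeries.coeff_C_mul, MvPowerSeries.X_def, MvPowerSeries.X_def,
      MvPowerSeries.coeff_monomial_mul, MvPowerSeries.coeff_monomial_mul]
    rcases Classical.em (d 0 = 0 ∧ d 2 = 0) with h | h
    · rw [if_neg (fun hle => by have := Finsupp.single_le_iff.mp hle; omega),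
        if_neg (fun hle => by have := Finsupp.single_le_iff.mp hle; omega),
        cf₀, dif_pos h, ← (hf d h).choose_spec]
      ring
    · rw [cf₀, dif_neg h, mul_zero, add_zero]
      rcases Classical.em (d 0 = 0) with h0 | h0
      · have h2 : d 2 ≠ 0 := fun h2 => h ⟨h0, h2⟩
        rw [if_neg (fun hle => by have := Finsupp.single_le_iff.mp hle; omega),
          if_pos (Finsupp.single_le_iff.mpr (by omega)), ch]
        have hx : (d - Finsupp.single 2 1 : Fin 4 →₀ ℕ) 0 = 0 := by
          rw [Finsupp.tsub_apply, Finsupp.single_apply]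
          simpa using h0
        rw [if_pos hx, tsub_add_cancel_of_le (Finsupp.single_le_iff.mpr (by omega))]
        ring
      · rw [if_pos (Finsupp.single_le_iff.mpr (by omega)), cg,
          tsub_add_cancel_of_le (Finsupp.single_le_iff.mpr (by omega))]
        split_ifs with hle
        · have hx : (d - Finsupp.single 2 1 : Fin 4 →₀ ℕ) 0 ≠ 0 := by
            rw [Finsupp.tsub_apply, Finsupp.single_apply]
            simpa using h0
          rw [ch, if_neg hx]
          ring
        · ring
  rw [key]
  refine Ideal.add_mem _ (Ideal.add_mem _ ?_ ?_) ?_ <;>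
    exact Ideal.mul_mem_right _ _ (Ideal.subset_span (by simp))

lemma ker_piHom : RingHom.ker piHom = J := by
  classical
  apply le_antisymm
  · intro f hf
    rw [RingHom.mem_ker] at hf
    apply mem_J_of_dvd
    intro d hd
    apply dvd_three
    have := congrArg (MvPowerSeries.coeff d) hf
    rw [map_zero] at this
    rw [show piHom f = resFun (MvPowerSeries.map PadicInt.toZMod f) from rfl,
      coeff_res, if_pos hd, MvPowerSeries.coeff_map] at this
    exact this
  · rw [J, Ideal.span_le]
    rintro x (rfl | rfl | rfl)
    · rw [SetLike.mem_coe, RingHom.mem_ker, piHom, RingHom.comp_apply, MvPowerSeries.map_X,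
        resHom_apply]
      ext d
      rw [coeff_res,
        show (MvPowerSeries.coeff d) (0 : MvPowerSeries (Fin 4) (ZMod 3)) = 0
          from map_zero _]
      split_ifs with h
      · rw [MvPowerSeries.coeff_X, if_neg]
        intro hd
        rw [hd] at h
        simp at h
      · rfl
    · rw [SetLike.mem_coe, RingHom.mem_ker, piHom, RingHom.comp_apply, MvPowerSeries.map_X,
        resHom_apply]
      ext d
      rw [coeff_res,
        show (MvPowerSeries.coeff d) (0 : MvPowerSeries (Fin 4) (ZMod 3)) = 0
          from map_zero _]
      split_ifs with h
      · rw [MvPowerSeries.coeff_X, if_neg]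
        intro hd
        rw [hd] at h
        simp at h
      · rfl
    · rw [SetLike.mem_coe, RingHom.mem_ker, map_ofNat]
      rw [show (3 : MvPowerSeries (Fin 4) (ZMod 3)) =
          MvPowerSeries.C (σ := Fin 4) (R := ZMod 3) 3 from (map_ofNat _ 3).symm,
        show (3 : ZMod 3) = 0 by decide, map_zero]

lemma J_isPrime : J.IsPrime := by
  haveI : IsDomain (MvPowerSeries (Fin 4) (ZMod 3)) := NoZeroDivisors.to_isDomain _
  rw [← ker_piHom]
  exact RingHom.ker_isPrime piHom

/-- In `A`, the ideal `P = (a₁, a₂)` generated by the images of `a₁` and `a₂` is a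
prime ideal. -/
theorem span_a1_a2_isPrime : (Ideal.span {a1, a2} : Ideal A).IsPrime := by
  haveI := J_isPrime
  have hmap : (Ideal.span {a1, a2} : Ideal A) =
      Ideal.map (Ideal.Quotient.mk relIdeal) J := by
    rw [J, Ideal.map_span]
    have himg : (Ideal.Quotient.mk relIdeal) ''
        {MvPowerSeries.X 0, MvPowerSeries.X 2, (3 : B)} =
        {a1, a2, Ideal.Quotient.mk relIdeal (3 : B)} := by
      rw [Set.image_insert_eq, Set.image_insert_eq, Set.image_singleton]
      rfl
    rw [himg]
    apply le_antisymm
    · apply Ideal.span_mono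
      rintro x (rfl | rfl)
      · exact Set.mem_insert _ _
      · exact Set.mem_insert_of_mem _ (Set.mem_insert _ _)
    · rw [Ideal.span_le]
      rintro x (rfl | rfl | rfl)
      · exact Ideal.subset_span (by simp)
      · exact Ideal.subset_span (by simp)
      · have h3 : Ideal.Quotient.mk relIdeal (3 : B) = a1 * b1 := by
          rw [a1, b1, ← map_mul, Ideal.Quotient.eq,
            show (3 : B) - MvPowerSeries.X 0 * MvPowerSeries.X 1 =
              -(MvPowerSeries.X 0 * MvPowerSeries.X 1 - 3) by ring]
          exact neg_mem (Ideal.subset_span (by simp))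
        rw [h3]
        exact Ideal.mul_mem_right _ _ (Ideal.subset_span (by simp))
  rw [hmap]
  apply Ideal.map_isPrime_of_surjective Ideal.Quotient.mk_surjective
  rw [Ideal.mk_ker, Ideal.span_le]
  rintro x (rfl | rfl)
  · refine Ideal.sub_mem _ ?_ ?_
    · exact Ideal.mul_mem_right _ _ (Ideal.subset_span (by simp))
    · exact Ideal.subset_span (by simp)
  · refine Ideal.sub_mem _ ?_ ?_
    · exact Ideal.mul_mem_right _ _ (Ideal.subset_span (by simp))
    · exact Ideal.subset_span (by simp)
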